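/- Let g ≥ 1 and τ = (τ_{ij}) ∈ M_g(ℂ) with det(Im τ) ≠ 0. Assume τ satisfies the Riemann relations (so that X_τ is an abelian variety) and that F_τ is a finite extension of ℚ whose degree [F_τ : ℚ] is odd. Then ρ(τ) ≤ g(g+1)/2. -/

import Mathlib

open Matrix Module IntermediateField
open scoped ComplexOrder

noncomputable section

/-- The period matrix `Π(τ) = (τ | I_g)`, a `g × 2g` complex matrix. -/
def PeriodMatrix (g : ℕ) (τ : Matrix (Fin g) (Fin g) ℂ) :
    Matrix (Fin g) (Fin g ⊕ Fin g) ℂ :=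
  Matrix.fromCols τ 1

/-- `F_τ`: the subfield of `ℂ` generated over `ℚ` by the entries of `τ`. -/
def EntryField (g : ℕ) (τ : Matrix (Fin g) (Fin g) ℂ) : IntermediateField ℚ ℂ :=
  IntermediateField.adjoin ℚ {x : ℂ | ∃ i j, τ i j = x}

/-- Entrywise inclusion `ℚ → ℂ` on square matrices, as an algebra homomorphism. -/
def mapQC (g : ℕ) : Matrix (Fin g) (Fin g) ℚ →ₐ[ℚ] Matrix (Fin g) (Fin g) ℂ :=
  (Algebra.ofId ℚ ℂ).mapMatrix

/-- The ℚ-vector space `N(τ)` of triples `(A,B,C)` of rational `g × g` matrices with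
`A, C` skew-symmetric and `A - Bτ + τᵗBᵗ + τᵗCτ = 0`; its dimension is the Picard
number of the complex torus `X_τ`. -/
def NSSpace (g : ℕ) (τ : Matrix (Fin g) (Fin g) ℂ) :
    Submodule ℚ (Matrix (Fin g) (Fin g) ℚ × Matrix (Fin g) (Fin g) ℚ ×
      Matrix (Fin g) (Fin g) ℚ) where
  carrier := {x | x.1ᵀ = -x.1 ∧ x.2.2ᵀ = -x.2.2 ∧
    mapQC g x.1 - mapQC g x.2.1 * τ + τᵀ * (mapQC g x.2.1)ᵀ + τᵀ * mapQC g x.2.2 * τ = 0}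
  add_mem' := by
    rintro a b ⟨ha1, ha2, ha3⟩ ⟨hb1, hb2, hb3⟩
    refine ⟨by simp [Matrix.transpose_add, ha1, hb1]; abel,
      by simp [Matrix.transpose_add, ha2, hb2]; abel, ?_⟩
    have key : mapQC g (a + b).1 - mapQC g (a + b).2.1 * τ + τᵀ * (mapQC g (a + b).2.1)ᵀ
        + τᵀ * mapQC g (a + b).2.2 * τ
        = (mapQC g a.1 - mapQC g a.2.1 * τ + τᵀ * (mapQC g a.2.1)ᵀ + τᵀ * mapQC g a.2.2 * τ)
        + (mapQC g b.1 - mapQC g b.2.1 * τ + τᵀ * (mapQC g b.2.1)ᵀ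
          + τᵀ * mapQC g b.2.2 * τ) := by
      simp only [Prod.fst_add, Prod.snd_add, map_add, Matrix.add_mul, Matrix.mul_add,
        Matrix.transpose_add]
      abel
    rw [key, ha3, hb3, add_zero]
  zero_mem' := by
    refine ⟨by simp, by simp, ?_⟩
    simp
  smul_mem' := by
    rintro q a ⟨ha1, ha2, ha3⟩
    refine ⟨by simp [Matrix.transpose_smul, ha1], by simp [Matrix.transpose_smul, ha2], ?_⟩
    have key : mapQC g (q • a).1 - mapQC g (q • a).2.1 * τ + τᵀ * (mapQC g (q • a).2.1)ᵀ
        + τᵀ * mapQC g (q • a).2.2 * τ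
        = q • (mapQC g a.1 - mapQC g a.2.1 * τ + τᵀ * (mapQC g a.2.1)ᵀ
          + τᵀ * mapQC g a.2.2 * τ) := by
      simp only [Prod.smul_fst, Prod.smul_snd, _root_.map_smul, Matrix.transpose_smul,
        smul_mul_assoc, mul_smul_comm]
      module
    rw [key, ha3, smul_zero]

/-- The Picard number `ρ(τ) = dim_ℚ N(τ)` of the complex torus `X_τ`. -/
def picard (g : ℕ) (τ : Matrix (Fin g) (Fin g) ℂ) : ℕ :=
  Module.finrank ℚ (NSSpace g τ)

/-- `τ` satisfies the Riemann relations, i.e. `X_τ` is an abelian variety: there is an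
integral alternating nondegenerate `E` with `Π E⁻¹ Πᵗ = 0` and `i Π E⁻¹ Π*` positive
definite. -/
def RiemannRelations (g : ℕ) (τ : Matrix (Fin g) (Fin g) ℂ) : Prop :=
  ∃ E : Matrix (Fin g ⊕ Fin g) (Fin g ⊕ Fin g) ℤ, Eᵀ = -E ∧ E.det ≠ 0 ∧
    PeriodMatrix g τ * (E.map (Int.cast : ℤ → ℂ))⁻¹ * (PeriodMatrix g τ)ᵀ = 0 ∧
    (Complex.I • (PeriodMatrix g τ * (E.map (Int.cast : ℤ → ℂ))⁻¹ *
      (PeriodMatrix g τ)ᴴ)).PosDef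

variable {g : ℕ}

private lemma key_identity (A B C R S t τ1 τ2 : Matrix (Fin g) (Fin g) ℂ)
    (hRS : R + S = 1) (ht : t = τ1 * Rᵀ + τ2 * Sᵀ) :
    R * (A - B * τ2 + τ1ᵀ * Bᵀ + τ1ᵀ * C * τ2) * Sᵀ
      + S * (A - B * τ1 + τ2ᵀ * Bᵀ + τ2ᵀ * C * τ1) * Rᵀ
    = (A - B * t + tᵀ * Bᵀ + tᵀ * C * t)
      - R * (A - B * τ1 + τ1ᵀ * Bᵀ + τ1ᵀ * C * τ1) * Rᵀ
      - S * (A - B * τ2 + τ2ᵀ * Bᵀ + τ2ᵀ * C * τ2) * Sᵀ := by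
  have hS : S = 1 - R := by rw [← hRS]; abel
  subst ht; subst hS
  simp only [transpose_add, transpose_mul, transpose_sub, transpose_one, transpose_transpose]
  noncomm_ring

/-- The bilinear-type expression `A - B s₂ + s₁ᵀ Bᵀ + s₁ᵀ C s₂`. -/
def relFn (s₁ s₂ : Matrix (Fin g) (Fin g) ℂ)
    (x : Matrix (Fin g) (Fin g) ℂ × Matrix (Fin g) (Fin g) ℂ × Matrix (Fin g) (Fin g) ℂ) :
    Matrix (Fin g) (Fin g) ℂ :=
  x.1 - x.2.1 * s₂ + s₁ᵀ * x.2.1ᵀ + s₁ᵀ * x.2.2 * s₂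

lemma relFn_add (s₁ s₂ : Matrix (Fin g) (Fin g) ℂ) (a b) :
    relFn s₁ s₂ (a + b) = relFn s₁ s₂ a + relFn s₁ s₂ b := by
  simp only [relFn, Prod.fst_add, Prod.snd_add, Matrix.add_mul, Matrix.mul_add,
    Matrix.transpose_add]
  abel

lemma relFn_smul (s₁ s₂ : Matrix (Fin g) (Fin g) ℂ) (c : ℂ) (a) :
    relFn s₁ s₂ (c • a) = c • relFn s₁ s₂ a := by
  simp only [relFn, Prod.smul_fst, Prod.smul_snd, Matrix.transpose_smul,
    smul_mul_assoc, mul_smul_comm, smul_sub, smul_add]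

/-- The complex solution space cut out by the three "diagonal" relations. -/
def WcSpace (g : ℕ) (τ1 τ2 τ3 : Matrix (Fin g) (Fin g) ℂ) :
    Submodule ℂ (Matrix (Fin g) (Fin g) ℂ × Matrix (Fin g) (Fin g) ℂ ×
      Matrix (Fin g) (Fin g) ℂ) where
  carrier := {x | x.1ᵀ = -x.1 ∧ x.2.2ᵀ = -x.2.2 ∧
    relFn τ1 τ1 x = 0 ∧ relFn τ2 τ2 x = 0 ∧ relFn τ3 τ3 x = 0}
  add_mem' := by
    rintro a b ⟨ha1, ha2, ha3, ha4, ha5⟩ ⟨hb1, hb2, hb3, hb4, hb5⟩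
    refine ⟨by simp [Matrix.transpose_add, ha1, hb1]; abel,
      by simp [Matrix.transpose_add, ha2, hb2]; abel, ?_, ?_, ?_⟩
    · rw [relFn_add, ha3, hb3, add_zero]
    · rw [relFn_add, ha4, hb4, add_zero]
    · rw [relFn_add, ha5, hb5, add_zero]
  zero_mem' := by
    refine ⟨by simp, by simp, ?_, ?_, ?_⟩ <;> simp [relFn]
  smul_mem' := by
    rintro c a ⟨h1, h2, h3, h4, h5⟩
    refine ⟨by simp [Matrix.transpose_smul, h1], by simp [Matrix.transpose_smul, h2],
      ?_, ?_, ?_⟩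
    · rw [relFn_smul, h3, smul_zero]
    · rw [relFn_smul, h4, smul_zero]
    · rw [relFn_smul, h5, smul_zero]

lemma card_le_pairs : Fintype.card {p : Fin g × Fin g // p.1 ≤ p.2} = g * (g + 1) / 2 := by
  rw [← Fintype.card_congr (Sym2.sortEquiv (α := Fin g)), Sym2.card]
  simp [Nat.choose_two_right, Fintype.card_fin, Nat.mul_comm]

lemma finrank_WcSpace_le (g : ℕ) (τ1 τ2 τ3 : Matrix (Fin g) (Fin g) ℂ)
    (hp' : (τ1 - τ2).det ≠ 0) (hq' : (τ1 - τ3).det ≠ 0) (hr' : (τ2 - τ3).det ≠ 0) :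
    Module.finrank ℂ (WcSpace g τ1 τ2 τ3) ≤ g * (g + 1) / 2 := by
  classical
  obtain ⟨p, hpdef⟩ : ∃ p, p = τ1 - τ2 := ⟨_, rfl⟩
  obtain ⟨q, hqdef⟩ : ∃ q, q = τ1 - τ3 := ⟨_, rfl⟩
  obtain ⟨r, hrdef⟩ : ∃ r, r = τ2 - τ3 := ⟨_, rfl⟩
  have hp : p.det ≠ 0 := by rwa [hpdef]
  have hq : q.det ≠ 0 := by rwa [hqdef]
  have hr : r.det ≠ 0 := by rwa [hrdef]
  have hpT : (pᵀ).det ≠ 0 := by rwa [Matrix.det_transpose]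
  have hqT : (qᵀ).det ≠ 0 := by rwa [Matrix.det_transpose]
  have hrT : (rᵀ).det ≠ 0 := by rwa [Matrix.det_transpose]
  obtain ⟨R, hRdef⟩ : ∃ R, R = -(rᵀ * (pᵀ)⁻¹) := ⟨_, rfl⟩
  obtain ⟨S, hSdef⟩ : ∃ S, S = qᵀ * (pᵀ)⁻¹ := ⟨_, rfl⟩
  have hqr : q - r = p := by rw [hpdef, hqdef, hrdef]; abel
  have hRS : R + S = 1 := by
    have h1 : R + S = (qᵀ - rᵀ) * (pᵀ)⁻¹ := by rw [hRdef, hSdef, Matrix.sub_mul]; abel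
    rw [h1, ← Matrix.transpose_sub, hqr, Matrix.mul_nonsing_inv _ (isUnit_iff_ne_zero.2 hpT)]
  have hRT : Rᵀ = -(p⁻¹ * r) := by
    rw [hRdef, Matrix.transpose_neg, Matrix.transpose_mul, ← Matrix.transpose_nonsing_inv]
    simp
  have hST : Sᵀ = p⁻¹ * q := by
    rw [hSdef, Matrix.transpose_mul, ← Matrix.transpose_nonsing_inv]
    simp
  have hppinv : p * p⁻¹ = 1 := Matrix.mul_nonsing_inv _ (isUnit_iff_ne_zero.2 hp)
  have hpinvp : p⁻¹ * p = 1 := Matrix.nonsing_inv_mul _ (isUnit_iff_ne_zero.2 hp)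
  have ht : τ3 = τ1 * Rᵀ + τ2 * Sᵀ := by
    rw [hRT, hST]
    have hτ1 : τ1 = p + τ2 := by rw [hpdef]; abel
    have hqr2 : p⁻¹ * (q - r) = 1 := by rw [hqr, hpinvp]
    have step1 : τ1 * -(p⁻¹ * r) + τ2 * (p⁻¹ * q)
        = -((p * p⁻¹) * r) + τ2 * (p⁻¹ * (q - r)) := by
      rw [hτ1]; noncomm_ring
    rw [step1, hppinv, hqr2, Matrix.one_mul, Matrix.mul_one, hrdef]
    abel
  have hdetR : R.det ≠ 0 := by
    rw [hRdef, Matrix.det_neg, Matrix.det_mul, Matrix.det_nonsing_inv, Ring.inverse_eq_inv']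
    exact mul_ne_zero (pow_ne_zero _ (neg_ne_zero.2 one_ne_zero))
      (mul_ne_zero hrT (inv_ne_zero hpT))
  have hdetS : S.det ≠ 0 := by
    rw [hSdef, Matrix.det_mul, Matrix.det_nonsing_inv, Ring.inverse_eq_inv']
    exact mul_ne_zero hqT (inv_ne_zero hpT)
  have hdetST : (Sᵀ).det ≠ 0 := by rwa [Matrix.det_transpose]
  have hdetRT : (Rᵀ).det ≠ 0 := by rwa [Matrix.det_transpose]
  -- cancellation helpers
  have cancel_left : ∀ {X : Matrix (Fin g) (Fin g) ℂ} (M : Matrix (Fin g) (Fin g) ℂ),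
      M.det ≠ 0 → M * X = 0 → X = 0 := by
    intro X M hM h
    have h2 := congrArg (fun Y => M⁻¹ * Y) h
    simpa [← Matrix.mul_assoc, Matrix.nonsing_inv_mul _ (isUnit_iff_ne_zero.2 hM)] using h2
  have cancel_right : ∀ {X : Matrix (Fin g) (Fin g) ℂ} (M : Matrix (Fin g) (Fin g) ℂ),
      M.det ≠ 0 → X * M = 0 → X = 0 := by
    intro X M hM h
    have h2 := congrArg (fun Y => Y * M⁻¹) h
    simpa [Matrix.mul_assoc, Matrix.mul_nonsing_inv _ (isUnit_iff_ne_zero.2 hM)] using h2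
  -- key consequence of membership : R L₁₂ Sᵀ + S L₂₁ Rᵀ = 0
  have key : ∀ x ∈ WcSpace g τ1 τ2 τ3,
      R * relFn τ1 τ2 x * Sᵀ + S * relFn τ2 τ1 x * Rᵀ = 0 := by
    rintro x ⟨-, -, h3, h4, h5⟩
    have hid := key_identity x.1 x.2.1 x.2.2 R S τ3 τ1 τ2 hRS ht
    simp only [relFn] at h3 h4 h5 ⊢
    rw [hid, h3, h4, h5]
    simp
  -- symmetry of the associated quadratic form
  have symm : ∀ x ∈ WcSpace g τ1 τ2 τ3,
      (R * relFn τ1 τ2 x * Sᵀ)ᵀ = R * relFn τ1 τ2 x * Sᵀ := by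
    intro x hx
    have h1 := hx.1
    have h2 := hx.2.1
    have hL : (relFn τ1 τ2 x)ᵀ = -(relFn τ2 τ1 x) := by
      simp only [relFn, Matrix.transpose_add, Matrix.transpose_sub, Matrix.transpose_mul,
        Matrix.transpose_transpose, h1, h2]
      noncomm_ring
    have hs : S * (relFn τ2 τ1 x * Rᵀ) = -(R * (relFn τ1 τ2 x * Sᵀ)) := by
      rw [eq_neg_iff_add_eq_zero, add_comm]
      have hk := key x hx
      simpa [Matrix.mul_assoc] using hk
    calc (R * relFn τ1 τ2 x * Sᵀ)ᵀ
        = S * ((relFn τ1 τ2 x)ᵀ * Rᵀ) := by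
          simp [Matrix.transpose_mul, Matrix.mul_assoc]
      _ = -(S * (relFn τ2 τ1 x * Rᵀ)) := by rw [hL]; simp
      _ = R * relFn τ1 τ2 x * Sᵀ := by rw [hs, neg_neg, Matrix.mul_assoc]
  -- injectivity of x ↦ R L₁₂(x) Sᵀ on the solution space
  have inj : ∀ x ∈ WcSpace g τ1 τ2 τ3, R * relFn τ1 τ2 x * Sᵀ = 0 → x = 0 := by
    intro x hx h0
    obtain ⟨h1, h2, h3, h4, h5⟩ := hx
    have hL12 : relFn τ1 τ2 x = 0 := by
      have h0' : R * (relFn τ1 τ2 x * Sᵀ) = 0 := by rw [← Matrix.mul_assoc]; exact h0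
      exact cancel_right _ hdetST (cancel_left _ hdetR h0')
    have hL21 : relFn τ2 τ1 x = 0 := by
      have hk := key x ⟨h1, h2, h3, h4, h5⟩
      rw [hL12] at hk
      simp only [Matrix.mul_zero, Matrix.zero_mul, zero_add] at hk
      have hk' : S * (relFn τ2 τ1 x * Rᵀ) = 0 := by rw [← Matrix.mul_assoc]; exact hk
      exact cancel_right _ hdetRT (cancel_left _ hdetS hk')
    have hB1 : (τ1ᵀ * x.2.2 - x.2.1) * p = 0 := by
      have hd : relFn τ1 τ1 x - relFn τ1 τ2 x = (τ1ᵀ * x.2.2 - x.2.1) * p := by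
        rw [hpdef]; simp only [relFn]; noncomm_ring
      rw [h3, hL12] at hd; simpa using hd.symm
    have hB2 : (τ2ᵀ * x.2.2 - x.2.1) * p = 0 := by
      have hd : relFn τ2 τ1 x - relFn τ2 τ2 x = (τ2ᵀ * x.2.2 - x.2.1) * p := by
        rw [hpdef]; simp only [relFn]; noncomm_ring
      rw [h4, hL21] at hd; simpa using hd.symm
    have hC : x.2.2 = 0 := by
      have hd : (τ1ᵀ * x.2.2 - x.2.1) * p - (τ2ᵀ * x.2.2 - x.2.1) * p = pᵀ * (x.2.2 * p) := by
        rw [hpdef]; simp only [Matrix.transpose_sub]; noncomm_ring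
      rw [hB1, hB2] at hd
      simp only [sub_zero, sub_self] at hd
      exact cancel_right _ hp (cancel_left _ hpT hd.symm)
    have hB : x.2.1 = 0 := by
      have hd := hB1
      rw [hC] at hd
      simp only [Matrix.mul_zero, zero_sub, Matrix.neg_mul, neg_eq_zero] at hd
      exact cancel_right _ hp hd
    have hA : x.1 = 0 := by
      have hd := h3
      simp only [relFn, hB, hC] at hd
      simpa using hd
    exact Prod.ext hA (Prod.ext hB hC)
  -- the injective linear map into "upper triangular coordinates"
  let θ : WcSpace g τ1 τ2 τ3 →ₗ[ℂ] ({pr : Fin g × Fin g // pr.1 ≤ pr.2} → ℂ) :=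
    { toFun := fun w => fun pr => (R * relFn τ1 τ2 w.1 * Sᵀ) pr.1.1 pr.1.2
      map_add' := by
        intro a b
        funext pr
        simp [relFn_add, Matrix.mul_add, Matrix.add_mul]
      map_smul' := by
        intro c a
        funext pr
        simp [relFn_smul, Matrix.mul_smul, Matrix.smul_mul] }
  have hθinj : Function.Injective θ := by
    rw [← LinearMap.ker_eq_bot, LinearMap.ker_eq_bot']
    intro w hw
    have hmem := w.2
    have hΘ : R * relFn τ1 τ2 w.1 * Sᵀ = 0 := by
      ext i j
      rcases le_total i j with hij | hij
      · exact congrFun hw ⟨(i, j), hij⟩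
      · have hs := symm w.1 hmem
        have hentry : (R * relFn τ1 τ2 w.1 * Sᵀ) i j = (R * relFn τ1 τ2 w.1 * Sᵀ) j i := by
          conv_lhs => rw [← hs]
          exact Matrix.transpose_apply _ _ _
        rw [hentry]
        exact congrFun hw ⟨(j, i), hij⟩
    exact Subtype.ext (inj w.1 hmem hΘ)
  calc Module.finrank ℂ (WcSpace g τ1 τ2 τ3)
      ≤ Module.finrank ℂ ({pr : Fin g × Fin g // pr.1 ≤ pr.2} → ℂ) :=
        LinearMap.finrank_le_finrank_of_injective hθinj
    _ = g * (g + 1) / 2 := by rw [Module.finrank_pi]; exact card_le_pairs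

-- Part B : transfer of linear independence from ℚ to ℂ

/-- The entrywise-cast map on triples of matrices. -/
def castTriple (g : ℕ) (x : Matrix (Fin g) (Fin g) ℚ × Matrix (Fin g) (Fin g) ℚ ×
    Matrix (Fin g) (Fin g) ℚ) :
    Matrix (Fin g) (Fin g) ℂ × Matrix (Fin g) (Fin g) ℂ × Matrix (Fin g) (Fin g) ℂ :=
  (mapQC g x.1, mapQC g x.2.1, mapQC g x.2.2)

lemma indep_cast {g n : ℕ}
    (v : Fin n → Matrix (Fin g) (Fin g) ℚ × Matrix (Fin g) (Fin g) ℚ × Matrix (Fin g) (Fin g) ℚ)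
    (hv : LinearIndependent ℚ v) : LinearIndependent ℂ (fun i => castTriple g (v i)) := by
  classical
  rw [Fintype.linearIndependent_iff] at hv ⊢
  intro c hc i
  let bC := Basis.ofVectorSpace ℚ ℂ
  suffices hall : ∀ β, bC.repr (c i) β = 0 by
    have : bC.repr (c i) = 0 := Finsupp.ext hall
    simpa using congrArg bC.repr.symm this
  intro β
  -- the main coordinatewise computation
  have main : ∀ (X : Fin n → Matrix (Fin g) (Fin g) ℚ),
      (∑ k, c k • mapQC g (X k)) = 0 → ∀ a b, ∑ k, (bC.repr (c k) β) * (X k a b) = 0 := by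
    intro X hX a b
    have h1 : ∑ k, c k * algebraMap ℚ ℂ (X k a b) = 0 := by
      have := congrArg (fun M => M a b) hX
      simpa [Matrix.sum_apply, mapQC, AlgHom.mapMatrix_apply, Matrix.map_apply,
        Algebra.ofId_apply] using this
    have h2 : ∑ k, (X k a b) • c k = 0 := by
      rw [← h1]
      refine Finset.sum_congr rfl fun k _ => ?_
      rw [Rat.smul_def, mul_comm]
      norm_num [Algebra.ofId_apply]
    have h3 := congrArg (fun z => bC.repr z β) h2
    simpa [map_sum, Finsupp.finset_sum_apply, mul_comm] using h3
  -- build the rational dependence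
  have hdep : ∑ k, (bC.repr (c k) β) • v k = 0 := by
    have e1 := main (fun k => (v k).1) ?h1
    have e2 := main (fun k => (v k).2.1) ?h2
    have e3 := main (fun k => (v k).2.2) ?h3
    case h1 =>
      have := congrArg Prod.fst hc
      simpa [castTriple, Prod.fst_sum, Prod.smul_fst] using this
    case h2 =>
      have := congrArg (fun z => z.2.1) hc
      simpa [castTriple, Prod.fst_sum, Prod.snd_sum, Prod.smul_snd, Prod.smul_fst] using this
    case h3 =>
      have := congrArg (fun z => z.2.2) hc
      simpa [castTriple, Prod.snd_sum, Prod.smul_snd] using this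
    refine Prod.ext ?_ (Prod.ext ?_ ?_)
    · ext a b
      simpa [Prod.fst_sum, Prod.smul_fst, Matrix.sum_apply, smul_eq_mul] using e1 a b
    · ext a b
      simpa [Prod.fst_sum, Prod.snd_sum, Prod.smul_fst, Prod.smul_snd, Matrix.sum_apply,
        smul_eq_mul] using e2 a b
    · ext a b
      simpa [Prod.snd_sum, Prod.smul_snd, Matrix.sum_apply, smul_eq_mul] using e3 a b
  exact hv _ hdep i

lemma picard_le_finrank_WcSpace (g : ℕ) (τ τ2 τ3 : Matrix (Fin g) (Fin g) ℂ)
    (h2 : ∀ x ∈ NSSpace g τ, relFn τ2 τ2 (castTriple g x) = 0)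
    (h3 : ∀ x ∈ NSSpace g τ, relFn τ3 τ3 (castTriple g x) = 0) :
    picard g τ ≤ Module.finrank ℂ (WcSpace g τ τ2 τ3) := by
  classical
  have hmem : ∀ x ∈ NSSpace g τ, castTriple g x ∈ WcSpace g τ τ2 τ3 := by
    intro x hx
    obtain ⟨hA, hC, hrel⟩ := hx
    refine ⟨?_, ?_, ?_, h2 x ⟨hA, hC, hrel⟩, h3 x ⟨hA, hC, hrel⟩⟩
    · show (mapQC g x.1)ᵀ = -(mapQC g x.1)
      simp only [mapQC, AlgHom.mapMatrix_apply, ← Matrix.transpose_map, hA]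
      ext a b
      simp [Matrix.map_apply]
    · show (mapQC g x.2.2)ᵀ = -(mapQC g x.2.2)
      simp only [mapQC, AlgHom.mapMatrix_apply, ← Matrix.transpose_map, hC]
      ext a b
      simp [Matrix.map_apply]
    · show relFn τ τ (castTriple g x) = 0
      simpa [relFn, castTriple] using hrel
  set n := picard g τ with hn
  let b : Basis (Fin n) ℚ (NSSpace g τ) := Module.finBasis ℚ (NSSpace g τ)
  have hbv : LinearIndependent ℚ ((NSSpace g τ).subtype ∘ b) :=
    b.linearIndependent.map' (NSSpace g τ).subtype (Submodule.ker_subtype _)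
  have hcv : LinearIndependent ℂ (fun i => castTriple g (((NSSpace g τ).subtype ∘ b) i)) :=
    indep_cast _ hbv
  let w : Fin n → WcSpace g τ τ2 τ3 := fun i => ⟨castTriple g (b i : _), hmem _ (b i).2⟩
  have hw : LinearIndependent ℂ w := by
    refine LinearIndependent.of_comp (WcSpace g τ τ2 τ3).subtype ?_
    exact hcv
  simpa using hw.fintype_card_le_finrank

-- Part C : transport along embeddings of the entry field

lemma tau_mem (g : ℕ) (τ : Matrix (Fin g) (Fin g) ℂ) (i j : Fin g) :
    τ i j ∈ EntryField g τ :=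
  IntermediateField.subset_adjoin ℚ _ ⟨i, j, rfl⟩

/-- `τ` as a matrix over its entry field. -/
def tauF (g : ℕ) (τ : Matrix (Fin g) (Fin g) ℂ) : Matrix (Fin g) (Fin g) (EntryField g τ) :=
  Matrix.of fun i j => (⟨τ i j, tau_mem g τ i j⟩ : EntryField g τ)

/-- The inclusion of the entry field into `ℂ`, as a ring homomorphism. -/
def valE (g : ℕ) (τ : Matrix (Fin g) (Fin g) ℂ) : EntryField g τ →+* ℂ :=
  (EntryField g τ).val.toRingHom

lemma tauF_map_val (g : ℕ) (τ : Matrix (Fin g) (Fin g) ℂ) :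
    (tauF g τ).map (valE g τ) = τ := by
  ext i j; rfl

lemma psi_rat {g : ℕ} {τ : Matrix (Fin g) (Fin g) ℂ} (ψ : EntryField g τ →+* ℂ) (x : ℚ) :
    ψ (algebraMap ℚ (EntryField g τ) x) = algebraMap ℚ ℂ x := by
  have h1 : ψ (algebraMap ℚ (EntryField g τ) x)
      = (ψ.comp (algebraMap ℚ (EntryField g τ))) x := rfl
  rw [h1, eq_ratCast (ψ.comp (algebraMap ℚ (EntryField g τ))), eq_ratCast (algebraMap ℚ ℂ)]

lemma map_ratmat {g : ℕ} {τ : Matrix (Fin g) (Fin g) ℂ} (ψ : EntryField g τ →+* ℂ)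
    {m k : Type*} (X : Matrix m k ℚ) :
    (X.map (algebraMap ℚ (EntryField g τ))).map ψ = X.map (algebraMap ℚ ℂ) := by
  ext i j
  exact psi_rat ψ (X i j)

lemma mapQC_eq_ratmat (g : ℕ) (X : Matrix (Fin g) (Fin g) ℚ) :
    mapQC g X = X.map (algebraMap ℚ ℂ) := by
  ext i j
  simp [mapQC, AlgHom.mapMatrix_apply, Matrix.map_apply, Algebra.ofId_apply]

lemma maphom_inj {F : Type*} [Field F] {m k : Type*} {ψ : F →+* ℂ}
    {M : Matrix m k F} (h : M.map ψ = 0) : M = 0 := by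
  ext i j
  have h2 := congrFun (congrFun h i) j
  exact ψ.injective (by simpa [Matrix.map_apply] using h2)

lemma det_map_ringHom {n' : Type*} [Fintype n'] [DecidableEq n'] {α β : Type*}
    [CommRing α] [CommRing β] (f : α →+* β) (M : Matrix n' n' α) :
    (M.map f).det = f M.det := by
  rw [RingHom.map_det]
  rfl

lemma fromColumns_map {m n1 n2 α β : Type*} (M : Matrix m n1 α) (N : Matrix m n2 α)
    (f : α → β) :
    (Matrix.fromCols M N).map f = Matrix.fromCols (M.map f) (N.map f) := by
  ext i j
  cases j <;> simp [Matrix.fromCols]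

lemma NS_transport (g : ℕ) (τ : Matrix (Fin g) (Fin g) ℂ) (ψ : EntryField g τ →+* ℂ)
    {x} (hx : x ∈ NSSpace g τ) :
    relFn ((tauF g τ).map ψ) ((tauF g τ).map ψ) (castTriple g x) = 0 := by
  obtain ⟨-, -, hrel⟩ := hx
  have key : ∀ χ : EntryField g τ →+* ℂ,
      ((x.1.map (algebraMap ℚ (EntryField g τ)))
        - (x.2.1.map (algebraMap ℚ (EntryField g τ))) * tauF g τ
        + (tauF g τ)ᵀ * (x.2.1.map (algebraMap ℚ (EntryField g τ)))ᵀ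
        + (tauF g τ)ᵀ * (x.2.2.map (algebraMap ℚ (EntryField g τ))) * tauF g τ).map χ
      = relFn ((tauF g τ).map χ) ((tauF g τ).map χ) (castTriple g x) := by
    intro χ
    simp only [relFn, castTriple, mapQC_eq_ratmat,
      Matrix.map_add _ (map_add χ), Matrix.map_sub _ (map_sub χ),
      Matrix.map_mul, Matrix.transpose_map, map_ratmat]
  have h0 : ((x.1.map (algebraMap ℚ (EntryField g τ)))
        - (x.2.1.map (algebraMap ℚ (EntryField g τ))) * tauF g τ
        + (tauF g τ)ᵀ * (x.2.1.map (algebraMap ℚ (EntryField g τ)))ᵀ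
        + (tauF g τ)ᵀ * (x.2.2.map (algebraMap ℚ (EntryField g τ))) * tauF g τ) = 0 := by
    apply maphom_inj (ψ := valE g τ)
    rw [key (valE g τ), tauF_map_val]
    simpa [relFn, castTriple, mapQC_eq_ratmat] using hrel
  rw [← key ψ, h0, Matrix.map_zero _ (map_zero ψ)]

lemma period_transport (g : ℕ) (τ : Matrix (Fin g) (Fin g) ℂ) (ψ : EntryField g τ →+* ℂ)
    (Fq : Matrix (Fin g ⊕ Fin g) (Fin g ⊕ Fin g) ℚ)
    (h : PeriodMatrix g τ * Fq.map (algebraMap ℚ ℂ) * (PeriodMatrix g τ)ᵀ = 0) :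
    Matrix.fromCols ((tauF g τ).map ψ) (1 : Matrix (Fin g) (Fin g) ℂ) *
      Fq.map (algebraMap ℚ ℂ) *
      (Matrix.fromCols ((tauF g τ).map ψ) (1 : Matrix (Fin g) (Fin g) ℂ))ᵀ = 0 := by
  have key : ∀ χ : EntryField g τ →+* ℂ,
      (Matrix.fromCols (tauF g τ) (1 : Matrix (Fin g) (Fin g) (EntryField g τ)) *
        Fq.map (algebraMap ℚ (EntryField g τ)) *
        (Matrix.fromCols (tauF g τ) (1 : Matrix (Fin g) (Fin g) (EntryField g τ)))ᵀ).map χ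
      = Matrix.fromCols ((tauF g τ).map χ) (1 : Matrix (Fin g) (Fin g) ℂ) *
        Fq.map (algebraMap ℚ ℂ) *
        (Matrix.fromCols ((tauF g τ).map χ) (1 : Matrix (Fin g) (Fin g) ℂ))ᵀ := by
    intro χ
    rw [Matrix.map_mul, Matrix.map_mul, Matrix.transpose_map, fromColumns_map,
      Matrix.map_one _ (map_zero χ) (map_one χ), map_ratmat]
  have h0 : Matrix.fromCols (tauF g τ) (1 : Matrix (Fin g) (Fin g) (EntryField g τ)) *
      Fq.map (algebraMap ℚ (EntryField g τ)) *
      (Matrix.fromCols (tauF g τ) (1 : Matrix (Fin g) (Fin g) (EntryField g τ)))ᵀ = 0 := by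
    apply maphom_inj (ψ := valE g τ)
    rw [key (valE g τ), tauF_map_val]
    exact h
  rw [← key ψ, h0, Matrix.map_zero _ (map_zero ψ)]

-- Part D : existence of a real embedding, determinant lemmas

lemma exists_real_embedding (g : ℕ) (τ : Matrix (Fin g) (Fin g) ℂ)
    (hfin : FiniteDimensional ℚ (EntryField g τ))
    (hodd : Odd (Module.finrank ℚ (EntryField g τ))) :
    ∃ σ : EntryField g τ →+* ℂ, ∀ x, (starRingEnd ℂ) (σ x) = σ x := by
  classical
  haveI := hfin
  haveI : NumberField (EntryField g τ) := ⟨⟩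
  have hcard := NumberField.InfinitePlace.card_add_two_mul_card_eq_rank (EntryField g τ)
  have hodd' : Odd (NumberField.InfinitePlace.nrRealPlaces (EntryField g τ)
      + 2 * NumberField.InfinitePlace.nrComplexPlaces (EntryField g τ)) := by
    rw [hcard]; exact hodd
  have hne : NumberField.InfinitePlace.nrRealPlaces (EntryField g τ) ≠ 0 := by
    intro h0
    rw [h0] at hodd'
    obtain ⟨k, hk⟩ := hodd'
    omega
  have hpos : 0 < Fintype.card
      {φ : EntryField g τ →+* ℂ // NumberField.ComplexEmbedding.IsReal φ} := by
    rw [NumberField.InfinitePlace.card_real_embeddings]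
    exact Nat.pos_of_ne_zero hne
  obtain ⟨⟨σ, hσ⟩⟩ := Fintype.card_pos_iff.mp hpos
  refine ⟨σ, fun x => ?_⟩
  have h := RingHom.congr_fun (NumberField.ComplexEmbedding.isReal_iff.mp hσ) x
  rwa [NumberField.ComplexEmbedding.conjugate_coe_eq] at h

lemma det_p_ne (g : ℕ) (τ : Matrix (Fin g) (Fin g) ℂ)
    (him : (τ.map Complex.im).det ≠ 0) :
    (τ - τ.map (starRingEnd ℂ)).det ≠ 0 := by
  have hform : τ - τ.map (starRingEnd ℂ)
      = (2 * Complex.I) • (τ.map Complex.im).map (Complex.ofRealHom) := by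
    ext i j
    simp only [Matrix.sub_apply, Matrix.smul_apply, Matrix.map_apply, Complex.sub_conj,
      Complex.ofRealHom_eq_coe, smul_eq_mul]
    push_cast
    ring
  rw [hform, Matrix.det_smul, det_map_ringHom]
  refine mul_ne_zero (pow_ne_zero _ (mul_ne_zero two_ne_zero Complex.I_ne_zero)) ?_
  simpa using him

lemma det_sub_ne_zero {g : ℕ} (τ t : Matrix (Fin g) (Fin g) ℂ)
    (Fm : Matrix (Fin g ⊕ Fin g) (Fin g ⊕ Fin g) ℂ)
    (hpos : (Complex.I • (Matrix.fromCols τ (1 : Matrix (Fin g) (Fin g) ℂ) * Fm *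
      (Matrix.fromCols τ (1 : Matrix (Fin g) (Fin g) ℂ))ᴴ)).PosDef)
    (hrel : Matrix.fromCols t (1 : Matrix (Fin g) (Fin g) ℂ) * Fm *
      (Matrix.fromCols t (1 : Matrix (Fin g) (Fin g) ℂ))ᵀ = 0)
    (htreal : t.map (starRingEnd ℂ) = t) :
    (τ - t).det ≠ 0 := by
  intro hdet
  obtain ⟨v, hv0, hv⟩ := Matrix.exists_vecMul_eq_zero_iff.mpr hdet
  have hvP : v ᵥ* Matrix.fromCols τ (1 : Matrix (Fin g) (Fin g) ℂ)
      = v ᵥ* Matrix.fromCols t 1 := by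
    rw [Matrix.vecMul_fromCols, Matrix.vecMul_fromCols]
    have hvt : v ᵥ* τ = v ᵥ* t := by
      rw [Matrix.vecMul_sub] at hv
      exact sub_eq_zero.mp hv
    rw [hvt]
  have hPtreal : (Matrix.fromCols t (1 : Matrix (Fin g) (Fin g) ℂ)).map (starRingEnd ℂ)
      = Matrix.fromCols t 1 := by
    rw [fromColumns_map, htreal, Matrix.map_one _ (map_zero _) (map_one _)]
  have hPtH : (Matrix.fromCols t (1 : Matrix (Fin g) (Fin g) ℂ))ᴴ
      = (Matrix.fromCols t 1)ᵀ := by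
    ext i j
    simp only [Matrix.conjTranspose_apply, Matrix.transpose_apply]
    have := congrFun (congrFun hPtreal j) i
    simpa [Matrix.map_apply] using this
  have hsv0 : star v ≠ 0 := by
    intro h
    apply hv0
    ext i
    simpa using congrFun h i
  have hlt := hpos.dotProduct_mulVec_pos hsv0
  rw [star_star] at hlt
  have hinner : v ⬝ᵥ ((Matrix.fromCols τ (1 : Matrix (Fin g) (Fin g) ℂ) * Fm *
      (Matrix.fromCols τ (1 : Matrix (Fin g) (Fin g) ℂ))ᴴ) *ᵥ star v) = 0 := by
    have e2 : (Matrix.fromCols τ (1 : Matrix (Fin g) (Fin g) ℂ))ᴴ *ᵥ star v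
        = star (v ᵥ* Matrix.fromCols τ 1) := by
      rw [Matrix.mulVec_conjTranspose, star_star]
    have e3 : star (v ᵥ* Matrix.fromCols τ (1 : Matrix (Fin g) (Fin g) ℂ))
        = (Matrix.fromCols t 1)ᵀ *ᵥ star v := by
      rw [hvP, Matrix.star_vecMul, hPtH]
    have e4 : v ᵥ* (Matrix.fromCols τ (1 : Matrix (Fin g) (Fin g) ℂ) * Fm *
        (Matrix.fromCols t (1 : Matrix (Fin g) (Fin g) ℂ))ᵀ) = 0 := by
      rw [← Matrix.vecMul_vecMul, ← Matrix.vecMul_vecMul, hvP, Matrix.vecMul_vecMul,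
        Matrix.vecMul_vecMul, ← Matrix.mul_assoc, hrel, Matrix.vecMul_zero]
    rw [← Matrix.mulVec_mulVec, e2, e3, Matrix.mulVec_mulVec, Matrix.dotProduct_mulVec, e4,
      zero_dotProduct]
  rw [Matrix.smul_mulVec, dotProduct_smul, hinner, smul_zero] at hlt
  exact lt_irrefl 0 hlt

theorem picard_le_of_odd_degree
    (g : ℕ) (hg : 1 ≤ g) (τ : Matrix (Fin g) (Fin g) ℂ)
    (him : (τ.map Complex.im).det ≠ 0)
    (hab : RiemannRelations g τ)
    (hfin : FiniteDimensional ℚ (EntryField g τ))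
    (hodd : Odd (Module.finrank ℚ (EntryField g τ))) :
    picard g τ ≤ g * (g + 1) / 2 := by
  classical
  obtain ⟨E, hEskew, hEdet, hrel, hpos⟩ := hab
  obtain ⟨σ, hσ⟩ := exists_real_embedding g τ hfin hodd
  set τ2 := τ.map (starRingEnd ℂ) with hτ2
  set τ3 := (tauF g τ).map σ with hτ3
  -- τ2 arises from the conjugate embedding
  have hψ2 : (tauF g τ).map ((starRingEnd ℂ).comp (EntryField g τ).val) = τ2 := by
    ext i j
    simp [tauF, Matrix.map_apply, hτ2]
  -- the rational inverse of E
  set Fq := (E.map (Int.cast : ℤ → ℚ))⁻¹ with hFq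
  have hEQdet : (E.map (Int.cast : ℤ → ℚ)).det ≠ 0 := by
    have hd : (E.map (Int.cast : ℤ → ℚ)).det = ((E.det : ℚ)) := by
      have h := det_map_ringHom (Int.castRingHom ℚ) E
      simpa using h
    rw [hd]
    exact_mod_cast hEdet
  have hone : E.map (Int.cast : ℤ → ℚ) * Fq = 1 :=
    Matrix.mul_nonsing_inv _ (isUnit_iff_ne_zero.2 hEQdet)
  have hFm : (E.map (Int.cast : ℤ → ℂ))⁻¹ = Fq.map (algebraMap ℚ ℂ) := by
    apply Matrix.inv_eq_right_inv
    have hcomp : (E.map (Int.cast : ℤ → ℚ)).map (algebraMap ℚ ℂ)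
        = E.map (Int.cast : ℤ → ℂ) := by
      ext i j
      simp [Matrix.map_apply]
    calc E.map (Int.cast : ℤ → ℂ) * Fq.map (algebraMap ℚ ℂ)
        = (E.map (Int.cast : ℤ → ℚ) * Fq).map (algebraMap ℚ ℂ) := by
          rw [Matrix.map_mul, hcomp]
      _ = 1 := by rw [hone, Matrix.map_one _ (map_zero _) (map_one _)]
  rw [hFm] at hrel hpos
  -- the transported period relation for the real embedding
  have hrel3 : Matrix.fromCols τ3 (1 : Matrix (Fin g) (Fin g) ℂ) *
      Fq.map (algebraMap ℚ ℂ) *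
      (Matrix.fromCols τ3 (1 : Matrix (Fin g) (Fin g) ℂ))ᵀ = 0 :=
    period_transport g τ σ Fq hrel
  have hτ3real : τ3.map (starRingEnd ℂ) = τ3 := by
    ext i j
    simp only [hτ3, Matrix.map_apply]
    exact hσ _
  -- the three determinant conditions
  have hdet1 : (τ - τ2).det ≠ 0 := det_p_ne g τ him
  have hdet2 : (τ - τ3).det ≠ 0 := by
    refine det_sub_ne_zero τ τ3 (Fq.map (algebraMap ℚ ℂ)) ?_ hrel3 hτ3real
    exact hpos
  have hdet3 : (τ2 - τ3).det ≠ 0 := by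
    have hform : τ2 - τ3 = (τ - τ3).map (starRingEnd ℂ) := by
      ext i j
      simp only [hτ2, Matrix.sub_apply, Matrix.map_apply, map_sub]
      congr 1
      exact (congrFun (congrFun hτ3real i) j).symm
    rw [hform, det_map_ringHom]
    simpa using hdet2
  -- assemble
  have hle1 : picard g τ ≤ Module.finrank ℂ (WcSpace g τ τ2 τ3) := by
    refine picard_le_finrank_WcSpace g τ τ2 τ3 ?_ ?_
    · intro x hx
      have h := NS_transport g τ ((starRingEnd ℂ).comp (EntryField g τ).val) hx
      rwa [hψ2] at h
    · intro x hx
      exact NS_transport g τ σ hx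
  exact le_trans hle1 (finrank_WcSpace_le g τ τ2 τ3 hdet1 hdet2 hdet3)

end
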